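/- Let q ≥ 1 and let H_q be the Higman group. Define elements w(p,i) ∈ H_q for p ∈ ℤ/qℤ and i ∈ ℕ by w(p,0) = a_p and w(p−1, i+1) = w(p,i) · a_{p−1} · w(p,i)⁻¹. Then for all p ∈ ℤ/qℤ and n ∈ ℕ, w(p,n) = a_p^{tow(n)} in H_q. -/

import Mathlib

/-- The relators `a_p a_{p−1} a_p⁻¹ a_{p−1}⁻²` (for `p ∈ ℤ/qℤ`) of the Higman group. -/
def higmanRels (q : ℕ) : Set (FreeGroup (ZMod q)) :=
  Set.range fun p : ZMod q =>
    FreeGroup.of p * FreeGroup.of (p - 1) * (FreeGroup.of p)⁻¹ *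
      (FreeGroup.of (p - 1) * FreeGroup.of (p - 1))⁻¹

/-- The Higman group `H_q`, generated by `a_p` for `p ∈ ℤ/qℤ` subject to the relations
`a_p a_{p−1} a_p⁻¹ = a_{p−1}²`. -/
abbrev Higman (q : ℕ) : Type := PresentedGroup (higmanRels q)

/-- The generator `a_p` of the Higman group `H_q`. -/
def hgen (q : ℕ) (p : ZMod q) : Higman q := PresentedGroup.of p

/-- The tower function: tow(0) = 1, tow(i+1) = 2^tow(i). -/
def tow : ℕ → ℕ
  | 0 => 1
  | n + 1 => 2 ^ tow n

/-- The elements `w(p, i)` of the Higman group, defined by `w(p, 0) = a_p` and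
`w(p−1, i+1) = w(p, i) · a_{p−1} · w(p, i)⁻¹` (equivalently,
`w(p, i+1) = w(p+1, i) · a_p · w(p+1, i)⁻¹`). -/
def wH (q : ℕ) : ℕ → ZMod q → Higman q
  | 0, p => hgen q p
  | i + 1, p => wH q i (p + 1) * hgen q p * (wH q i (p + 1))⁻¹


lemma hgen_rel (q : ℕ) (p : ZMod q) :
    hgen q (p + 1) * hgen q p * (hgen q (p + 1))⁻¹ = hgen q p ^ 2 := by
  have h : (QuotientGroup.mk (FreeGroup.of (p+1) * FreeGroup.of ((p+1) - 1) *
      (FreeGroup.of (p+1))⁻¹ * (FreeGroup.of ((p+1) - 1) * FreeGroup.of ((p+1) - 1))⁻¹) :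
      Higman q) = 1 := by
    apply (QuotientGroup.eq_one_iff _).mpr
    exact Subgroup.subset_normalClosure ⟨p + 1, rfl⟩
  simp only [add_sub_cancel_right] at h
  have h2 : hgen q (p+1) * hgen q p * (hgen q (p+1))⁻¹ * (hgen q p * hgen q p)⁻¹ = 1 := by
    simp only [hgen, PresentedGroup.of, map_mul, map_inv, mul_inv_rev] at h ⊢; exact h
  rw [mul_inv_eq_one] at h2
  rw [pow_two]
  exact h2

lemma hgen_conj_pow (q : ℕ) (p : ZMod q) (k : ℕ) :
    hgen q (p + 1) ^ k * hgen q p * (hgen q (p + 1) ^ k)⁻¹ = hgen q p ^ 2 ^ k := by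
  induction k with
  | zero => simp
  | succ k ih =>
    have : hgen q (p+1) ^ (k+1) * hgen q p * (hgen q (p+1) ^ (k+1))⁻¹
        = hgen q (p+1) * (hgen q (p+1) ^ k * hgen q p * (hgen q (p+1) ^ k)⁻¹) *
          (hgen q (p+1))⁻¹ := by
      rw [pow_succ']
      group
    rw [this, ih, ← conj_pow, hgen_rel, ← pow_mul, pow_succ, mul_comm (2^k) 2, two_mul]

/-- For `q ≥ 1`, all `p ∈ ℤ/qℤ` and `n ∈ ℕ`, one has
`w(p, n) = a_p^{tow(n)}` in the Higman group `H_q`. -/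
theorem wH_eq_pow_tow (q : ℕ) (hq : 1 ≤ q) (p : ZMod q) (n : ℕ) :
    wH q n p = hgen q p ^ tow n := by
  induction n generalizing p with
  | zero => simp [wH, tow]
  | succ n ih =>
    rw [wH, ih, tow, hgen_conj_pow]
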